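/- Let b : ℝⁿ → ℝ be continuously differentiable, let F : ℝⁿ → ℝⁿ be locally Lipschitz, let x : [0,T] → ℝⁿ satisfy ẋ(t) = F(x(t)) with b(x(0)) ≥ 0, and suppose ∇b(x(t)) · F(x(t)) ≥ −κ·b(x(t)) for all t ∈ [0,T], where κ > 0. Then b(x(t)) ≥ 0 for all t ∈ [0,T]. -/

import Mathlib

/-- Safety via CBFs along a closed-loop trajectory: if `b(x(0)) ≥ 0` and the CBF
inequality `∇b(x(t))·F(x(t)) ≥ −κ b(x(t))` holds on `[0,T]`, then `b(x(t)) ≥ 0`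
on `[0,T]`. -/
theorem cbf_safety {n : ℕ} {T κ : ℝ} (hT : 0 ≤ T) (hκ : 0 < κ)
    (b : (Fin n → ℝ) → ℝ) (hb : ContDiff ℝ 1 b)
    (F : (Fin n → ℝ) → (Fin n → ℝ)) (hF : LocallyLipschitz F)
    (x : ℝ → (Fin n → ℝ))
    (hx : ∀ t ∈ Set.Icc (0:ℝ) T, HasDerivAt x (F (x t)) t)
    (h0 : 0 ≤ b (x 0))
    (hcbf : ∀ t ∈ Set.Icc (0:ℝ) T, fderiv ℝ b (x t) (F (x t)) ≥ -κ * b (x t)) :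
    ∀ t ∈ Set.Icc (0:ℝ) T, 0 ≤ b (x t) := by
  set g : ℝ → ℝ := fun t => Real.exp (κ * t) * b (x t) with hg
  -- derivative of g at points of Icc
  have hgd : ∀ t ∈ Set.Icc (0:ℝ) T, HasDerivAt g
      (κ * Real.exp (κ * t) * b (x t) +
        Real.exp (κ * t) * fderiv ℝ b (x t) (F (x t))) t := by
    intro t ht
    have hbx : HasDerivAt (fun s => b (x s)) (fderiv ℝ b (x t) (F (x t))) t :=
      ((hb.differentiable one_ne_zero (x t)).hasFDerivAt).comp_hasDerivAt t (hx t ht)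
    have hexp : HasDerivAt (fun s => Real.exp (κ * s)) (κ * Real.exp (κ * t)) t := by
      have := (Real.hasDerivAt_exp (κ * t)).comp t ((hasDerivAt_id t).const_mul κ)
      simpa [mul_comm, Function.comp_def] using this
    exact hexp.mul hbx
  have hmono : MonotoneOn g (Set.Icc 0 T) := by
    apply monotoneOn_of_deriv_nonneg (convex_Icc 0 T)
    · exact fun t ht => ((hgd t ht).continuousAt).continuousWithinAt
    · intro t ht
      rw [interior_Icc] at ht
      have ht' : t ∈ Set.Icc (0:ℝ) T := Set.mem_Icc_of_Ioo ht
      exact ((hgd t ht').differentiableAt).differentiableWithinAt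
    · intro t ht
      rw [interior_Icc] at ht
      have ht' : t ∈ Set.Icc (0:ℝ) T := Set.mem_Icc_of_Ioo ht
      rw [(hgd t ht').deriv]
      have := hcbf t ht'
      nlinarith [Real.exp_pos (κ * t), this]
  intro t ht
  have h0' : (0:ℝ) ∈ Set.Icc (0:ℝ) T := by constructor <;> simp [hT]
  have := hmono h0' ht ht.1
  have hg0 : 0 ≤ g 0 := by simp [hg, h0]
  have hgt : 0 ≤ g t := le_trans hg0 this
  simp only [hg] at hgt
  have he := Real.exp_pos (κ * t)
  nlinarith
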